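/- Let N ≥ 1, let R be a complex N×N matrix, let γ ∈ ℝ, and let R^γ be the 2N×2N block matrix R^γ = [[(1+γ)·R, −γ·R], [I, 0]], where I is the N×N identity. Then a complex number μ is an eigenvalue of R^γ if and only if there exists an eigenvalue λ of R such that μ² − (1+γ)·λ·μ + γ·λ = 0. -/

import Mathlib

open Filter Topology Matrix

lemma mem_spec_iff {n : Type*} [Fintype n] [DecidableEq n] (M : Matrix n n ℂ) (μ : ℂ) :
    μ ∈ spectrum ℂ M ↔ ∃ v, v ≠ 0 ∧ M.mulVec v = μ • v := by
  rw [← AlgEquiv.spectrum_eq (Matrix.toLinAlgEquiv' (R := ℂ) (n := n)) M,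
    ← Module.End.hasEigenvalue_iff_mem_spectrum]
  constructor
  · intro h
    obtain ⟨v, hv⟩ := h.exists_hasEigenvector
    exact ⟨v, hv.2, by simpa [Matrix.toLinAlgEquiv'_apply] using hv.apply_eq_smul⟩
  · rintro ⟨v, hv, he⟩
    exact Module.End.hasEigenvalue_of_hasEigenvector
      ⟨Module.End.mem_eigenspace_iff.2 (by simpa [Matrix.toLinAlgEquiv'_apply] using he), hv⟩

/-- The spectrum of the inertial block matrix `R^γ = [[(1+γ)R, −γR], [I, 0]]`: `μ` is an
eigenvalue of `R^γ` iff `μ² − (1+γ)λμ + γλ = 0` for some eigenvalue `λ` of `R`. -/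
theorem stmt_10 {N : ℕ} (hN : 1 ≤ N) (R : Matrix (Fin N) (Fin N) ℂ) (γ : ℝ)
    (Rγ : Matrix (Fin N ⊕ Fin N) (Fin N ⊕ Fin N) ℂ)
    (hRγ : Rγ = Matrix.fromBlocks ((1 + (γ : ℂ)) • R) ((-(γ : ℂ)) • R) 1 0)
    (μ : ℂ) :
    μ ∈ spectrum ℂ Rγ ↔
      ∃ lam ∈ spectrum ℂ R, μ ^ 2 - (1 + (γ : ℂ)) * lam * μ + (γ : ℂ) * lam = 0 := by
  haveI : NeZero N := ⟨by omega⟩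
  haveI : Nonempty (Fin N) := ⟨⟨0, by omega⟩⟩
  have hspec : (spectrum ℂ R).Nonempty :=
    spectrum.nonempty_of_isAlgClosed_of_finiteDimensional (𝕜 := ℂ) R
  have key : μ ∈ spectrum ℂ Rγ ↔
      μ ^ 2 ∈ spectrum ℂ (((1 + (γ : ℂ)) * μ - γ) • R) := by
    rw [mem_spec_iff, mem_spec_iff]
    constructor
    · rintro ⟨x, hx, he⟩
      rw [hRγ, Matrix.fromBlocks_mulVec] at he
      have h1 : ((1 + (γ : ℂ)) • R) *ᵥ (x ∘ Sum.inl) + ((-(γ : ℂ)) • R) *ᵥ (x ∘ Sum.inr)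
          = μ • (x ∘ Sum.inl) := by
        funext i; exact congrFun he (Sum.inl i)
      have h2 : ∀ i, x (Sum.inl i) = μ * x (Sum.inr i) := by
        intro i
        have := congrFun he (Sum.inr i)
        simpa [Matrix.one_mulVec, Matrix.zero_mulVec] using this
      set v : Fin N → ℂ := x ∘ Sum.inr with hvdef
      have hv : v ≠ 0 := by
        intro h0
        apply hx
        funext i
        cases i with
        | inl i =>
          have := h2 i
          have h0i : x (Sum.inr i) = 0 := congrFun h0 i
          simp [h0i] at this
          simpa using this
        | inr i => exact congrFun h0 i
      refine ⟨v, hv, funext fun i => ?_⟩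
      have h1i := congrFun h1 i
      have heq : x ∘ Sum.inl = μ • v := funext fun j => by simpa [hvdef] using h2 j
      rw [heq] at h1i
      simp only [Matrix.smul_mulVec, Matrix.mulVec_smul, Pi.add_apply, Pi.smul_apply,
        smul_eq_mul] at h1i ⊢
      linear_combination h1i
    · rintro ⟨v, hv, he⟩
      refine ⟨Sum.elim (μ • v) v, ?_, ?_⟩
      · intro h0
        apply hv
        funext i
        exact congrFun h0 (Sum.inr i)
      · rw [hRγ, Matrix.fromBlocks_mulVec]
        funext i
        cases i with
        | inl i =>
          have hei := congrFun he i
          simp only [Sum.elim_comp_inl, Sum.elim_comp_inr, Sum.elim_inl, Matrix.smul_mulVec,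
            Matrix.mulVec_smul, Pi.add_apply, Pi.smul_apply, smul_eq_mul] at hei ⊢
          linear_combination hei
        | inr i =>
          simp [Matrix.one_mulVec, Matrix.zero_mulVec]
  rw [key, spectrum.smul_eq_smul ((1 + (γ : ℂ)) * μ - γ) R hspec]
  constructor
  · rintro ⟨lam, hlam, hle⟩
    exact ⟨lam, hlam, by simp only [smul_eq_mul] at hle; linear_combination -hle⟩
  · rintro ⟨lam, hlam, hle⟩
    exact ⟨lam, hlam, by simp only [smul_eq_mul]; linear_combination -hle⟩
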